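/- Let (V, ℓ) be a weighted directed graph, let J ⊆ V × V be a set of edges, let X, Y ⊆ V, and let u, v ∈ V. Suppose that every walk from u to v of finite length contains an occurrence of some vertex x ∈ X followed (not necessarily immediately) by an occurrence of some vertex y ∈ Y such that every step of the walk between these two occurrences lies in J. Then d(u, v) = inf_{x ∈ X, y ∈ Y} ( d(u, x) + d_J(x, y) + d(y, v) ). (This is the correctness of computing the distance between vertices in two different pieces B and B' via the boundary vertex sets X and Y and the intermediate subgraph J.) -/

import Mathlib

open scoped ENNReal

/-- The length of a walk `w₀, w₁, …, w_k`, given as a list of vertices, with respect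
to the length function `ℓ : V → V → ℝ≥0∞`: the sum `Σ ℓ (w_{i-1}) (w_i)`. -/
noncomputable def walkLen {V : Type*} (ℓ : V → V → ℝ≥0∞) : List V → ℝ≥0∞
  | [] => 0
  | [_] => 0
  | a :: b :: rest => ℓ a b + walkLen ℓ (b :: rest)

/-- `IsWalkIn F u v w` means the (nonempty) list of vertices `w` is a walk from `u`
to `v` all of whose consecutive pairs lie in `F`. -/
def IsWalkIn {V : Type*} (F : Set (V × V)) (u v : V) (w : List V) : Prop :=
  w.head? = some u ∧ w.getLast? = some v ∧ w.Chain' (fun a b => (a, b) ∈ F)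

/-- `gdist ℓ F u v` is the infimum in `[0,∞]` of the lengths of all walks from `u`
to `v` whose consecutive pairs lie in `F`. Taking `F = Set.univ` gives the distance
`d(u,v)` in the weighted directed graph `(V, ℓ)`. -/
noncomputable def gdist {V : Type*} (ℓ : V → V → ℝ≥0∞) (F : Set (V × V)) (u v : V) : ℝ≥0∞ :=
  ⨅ w ∈ {w : List V | IsWalkIn F u v w}, walkLen ℓ w

lemma chain'_univ {V : Type*} (l : List V) :
    l.Chain' (fun a b => (a, b) ∈ (Set.univ : Set (V × V))) := by
  induction l with
  | nil => simp [List.Chain']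
  | cons h t ih => cases t <;> simp_all [List.Chain', List.isChain_cons_cons]

lemma walkLen_append_cons {V : Type*} (ℓ : V → V → ℝ≥0∞) (m : V) :
    ∀ (a c : List V), walkLen ℓ (a ++ m :: c) = walkLen ℓ (a ++ [m]) + walkLen ℓ (m :: c)
  | [], c => by simp [walkLen]
  | [b], c => by simp [walkLen]
  | b :: b' :: a'', c => by
    have ih := walkLen_append_cons ℓ m (b' :: a'') c
    show ℓ b b' + walkLen ℓ ((b' :: a'') ++ m :: c)
        = ℓ b b' + walkLen ℓ ((b' :: a'') ++ [m]) + walkLen ℓ (m :: c)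
    rw [ih, add_assoc]

lemma gdist_le_walk {V : Type*} (ℓ : V → V → ℝ≥0∞) (F : Set (V × V)) {u v : V} {w : List V}
    (hw : IsWalkIn F u v w) : gdist ℓ F u v ≤ walkLen ℓ w :=
  iInf₂_le w hw

/-- Gluing two walks sharing an endpoint. -/
lemma glue_walks {V : Type*} (ℓ : V → V → ℝ≥0∞) {F G : Set (V × V)} {u x v : V} {a b : List V}
    (ha : IsWalkIn F u x a) (hb : IsWalkIn G x v b) :
    IsWalkIn (Set.univ : Set (V × V)) u v (a ++ b.tail) ∧
      walkLen ℓ (a ++ b.tail) = walkLen ℓ a + walkLen ℓ b := by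
  obtain ⟨ha1, ha2, -⟩ := ha
  obtain ⟨hb1, hb2, -⟩ := hb
  obtain ⟨s, rfl⟩ := List.getLast?_eq_some_iff.1 ha2
  obtain ⟨b', rfl⟩ : ∃ b', b = x :: b' := by
    cases b with
    | nil => simp at hb1
    | cons h t =>
      simp only [List.head?_cons, Option.some.injEq] at hb1
      exact ⟨t, by rw [hb1]⟩
  constructor
  · refine ⟨?_, ?_, chain'_univ _⟩
    · simpa [List.head?_append] using ha1
    · cases b' with
      | nil =>
        simp only [List.getLast?_singleton, Option.some.injEq] at hb2
        simp [hb2]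
      | cons h t =>
        rw [List.tail_cons, List.getLast?_append]
        have h2 : (h :: t).getLast? = some v := by
          rw [List.getLast?_cons_cons] at hb2; exact hb2
        simp [h2]
  · rw [List.tail_cons, List.append_assoc, List.singleton_append, walkLen_append_cons]

/-- Correctness of computing distances between two different pieces via their
boundary sets `X`, `Y` and the intermediate subgraph `J`: if every finite-length
walk from `u` to `v` contains a subwalk from some `x ∈ X` to some `y ∈ Y` all of
whose steps lie in `J`, then
`d(u,v) = inf_{x ∈ X, y ∈ Y} (d(u,x) + d_J(x,y) + d(y,v))`. -/
theorem dist_eq_iInf_through_two_boundaries {V : Type*} [Fintype V]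
    (ℓ : V → V → ℝ≥0∞) (J : Set (V × V)) (X Y : Set V) (u v : V)
    (hcover : ∀ w : List V, IsWalkIn (Set.univ : Set (V × V)) u v w →
      walkLen ℓ w ≠ ⊤ →
      ∃ x ∈ X, ∃ y ∈ Y, ∃ w₁ w₂ w₃ : List V,
        w = w₁ ++ w₂ ++ w₃ ∧ IsWalkIn J x y w₂) :
    gdist ℓ Set.univ u v =
      ⨅ x ∈ X, ⨅ y ∈ Y,
        (gdist ℓ Set.univ u x + gdist ℓ J x y + gdist ℓ Set.univ y v) := by
  apply le_antisymm
  · refine le_iInf₂ fun x hx => le_iInf₂ fun y hy => ?_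
    have hstep : ∀ a b c : List V, IsWalkIn Set.univ u x a → IsWalkIn J x y b →
        IsWalkIn Set.univ y v c →
        gdist ℓ Set.univ u v ≤ walkLen ℓ a + walkLen ℓ b + walkLen ℓ c := by
      intro a b c ha hb hc
      obtain ⟨hbc, ebc⟩ := glue_walks ℓ hb hc
      obtain ⟨habc, eabc⟩ := glue_walks ℓ ha hbc
      calc gdist ℓ Set.univ u v ≤ walkLen ℓ (a ++ (b ++ c.tail).tail) := gdist_le_walk ℓ _ habc
      _ = walkLen ℓ a + (walkLen ℓ b + walkLen ℓ c) := by rw [eabc, ebc]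
      _ = walkLen ℓ a + walkLen ℓ b + walkLen ℓ c := by rw [add_assoc]
    conv_rhs => rw [gdist, gdist, gdist]
    simp only [ENNReal.iInf_add, ENNReal.add_iInf, le_iInf_iff]
    exact fun c hc b hb a ha => hstep a b c ha hb hc
  · rw [gdist]
    refine le_iInf₂ fun w hw => ?_
    by_cases htop : walkLen ℓ w = ⊤
    · simp [htop]
    obtain ⟨x, hx, y, hy, w₁, w₂, w₃, rfl, hw₂⟩ := hcover w hw htop
    refine le_trans (iInf₂_le_of_le x hx (iInf₂_le_of_le y hy le_rfl)) ?_
    have h21 := hw₂.1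
    have h22 := hw₂.2.1
    obtain ⟨t, rfl⟩ : ∃ t, w₂ = x :: t := by
      cases w₂ with
      | nil => simp at h21
      | cons h t =>
        simp only [List.head?_cons, Option.some.injEq] at h21
        exact ⟨t, by rw [h21]⟩
    obtain ⟨s, hs⟩ := List.getLast?_eq_some_iff.1 h22
    have ha : IsWalkIn (Set.univ : Set (V × V)) u x (w₁ ++ [x]) := by
      refine ⟨?_, by simp, chain'_univ _⟩
      cases w₁ with
      | nil =>
        have h := hw.1
        simp only [List.nil_append] at h ⊢
        simp only [List.head?_cons, List.cons_append, List.head?_cons] at h ⊢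
        exact h
      | cons h0 t0 =>
        have h := hw.1
        simp only [List.cons_append, List.head?_cons] at h ⊢
        exact h
    have hc : IsWalkIn (Set.univ : Set (V × V)) y v (y :: w₃) := by
      refine ⟨by simp, ?_, chain'_univ _⟩
      cases w₃ with
      | nil =>
        have h : (w₁ ++ (x :: t) ++ ([] : List V)).getLast? = some v := hw.2.1
        simp only [List.append_nil, List.getLast?_append] at h
        rw [h22] at h
        simpa using h
      | cons h0 t0 =>
        have h : (w₁ ++ (x :: t) ++ (h0 :: t0)).getLast? = some v := hw.2.1
        simp only [List.getLast?_append] at h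
        simpa using h
    have key : walkLen ℓ (w₁ ++ (x :: t) ++ w₃)
        = walkLen ℓ (w₁ ++ [x]) + walkLen ℓ (x :: t) + walkLen ℓ (y :: w₃) := by
      have h3 : x :: (t ++ w₃) = s ++ y :: w₃ := by
        rw [← List.cons_append, hs, List.append_assoc, List.singleton_append]
      have e1 : walkLen ℓ (x :: (t ++ w₃)) = walkLen ℓ (s ++ [y]) + walkLen ℓ (y :: w₃) := by
        rw [h3, walkLen_append_cons ℓ y s w₃]
      rw [List.append_assoc, List.cons_append, walkLen_append_cons ℓ x w₁ (t ++ w₃), e1,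
        ← hs, add_assoc]
    rw [key]
    exact add_le_add (add_le_add (gdist_le_walk ℓ _ ha) (gdist_le_walk ℓ _ hw₂))
      (gdist_le_walk ℓ _ hc)
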